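/- Let X be a real random variable with Gaussian law of mean 0 and variance σ² > 0. Then X² has the Gamma distribution with shape parameter 1/2 and rate parameter 1/(2σ²). -/

import Mathlib

open MeasureTheory ProbabilityTheory Real Set

open scoped ENNReal NNReal

/-- One-dimensional change of variables for the Lebesgue integral. -/
lemma lintegral_image_eq_lintegral_abs_deriv_mul' {s : Set ℝ} {f f' : ℝ → ℝ}
    (hs : MeasurableSet s) (hf' : ∀ x ∈ s, HasDerivWithinAt f (f' x) s x)
    (hf : Set.InjOn f s) (g : ℝ → ℝ≥0∞) :
    ∫⁻ x in f '' s, g x = ∫⁻ x in s, ENNReal.ofReal |f' x| * g (f x) := by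
  simpa only [ContinuousLinearMap.det_toSpanSingleton] using
    MeasureTheory.lintegral_image_eq_lintegral_abs_det_fderiv_mul volume hs
      (fun x hx => (hf' x hx).hasFDerivWithinAt) hf g

lemma gammaPDF_half_of_nonpos {r x : ℝ} (hx : x ≤ 0) : gammaPDF (1 / 2) r x = 0 := by
  rcases lt_or_eq_of_le hx with h | h
  · exact gammaPDF_of_neg h
  · subst h
    rw [gammaPDF_of_nonneg le_rfl, Real.zero_rpow (by norm_num : (1:ℝ)/2 - 1 ≠ 0)]
    simp

/-- If `X` is a real random variable with Gaussian law of mean `0` and variance `σ² > 0`,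
then `X²` has the Gamma distribution with shape `1/2` and rate `1/(2σ²)`. -/
theorem sq_of_gaussian_is_gamma
    {Ω : Type*} [MeasurableSpace Ω] (μ : Measure Ω) [IsProbabilityMeasure μ]
    (X : Ω → ℝ) (σ : ℝ) (hσ : 0 < σ) (hmeas : Measurable X)
    (hgauss : Measure.map X μ = gaussianReal 0 ⟨σ ^ 2, by positivity⟩) :
    Measure.map (fun ω => X ω ^ 2) μ = gammaMeasure (1 / 2) (1 / (2 * σ ^ 2)) := by
  set v : ℝ≥0 := ⟨σ ^ 2, by positivity⟩ with hv_def
  have hv : v ≠ 0 := by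
    intro h
    have : σ ^ 2 = 0 := congrArg NNReal.toReal h
    nlinarith
  set r : ℝ := 1 / (2 * σ ^ 2) with hr_def
  have hr : 0 < r := by positivity
  have hsq : Measurable fun x : ℝ => x ^ 2 := measurable_id.pow_const 2
  have hmap : Measure.map (fun ω => X ω ^ 2) μ
      = Measure.map (fun x : ℝ => x ^ 2) (gaussianReal 0 v) := by
    rw [← hgauss, Measure.map_map hsq hmeas]
    rfl
  rw [hmap]
  haveI : IsProbabilityMeasure (Measure.map (fun x : ℝ => x ^ 2) (gaussianReal 0 v)) :=
    Measure.isProbabilityMeasure_map hsq.aemeasurable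
  refine Measure.ext_of_Iic _ _ (fun y => ?_)
  rw [Measure.map_apply hsq measurableSet_Iic, gammaMeasure,
    withDensity_apply _ measurableSet_Iic]
  by_cases hy : 0 ≤ y
  · -- main case
    set s : ℝ := Real.sqrt y with hs_def
    have hs0 : 0 ≤ s := Real.sqrt_nonneg y
    have hssq : s ^ 2 = y := Real.sq_sqrt hy
    have hpre : (fun x : ℝ => x ^ 2) ⁻¹' Iic y = Icc (-s) s := by
      ext x
      simp only [mem_preimage, mem_Iic, mem_Icc, ← abs_le]
      constructor
      · exact fun h => Real.abs_le_sqrt h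
      · intro h
        calc x ^ 2 = |x| ^ 2 := (sq_abs x).symm
          _ ≤ s ^ 2 := by gcongr
          _ = y := hssq
    -- the gamma side
    have hinj : Set.InjOn (fun x : ℝ => x ^ 2) (Ioc 0 s) := by
      intro a ha b hb h
      simp only [mem_Ioc] at ha hb
      simp only at h
      nlinarith [ha.1, hb.1]
    have himg : (fun x : ℝ => x ^ 2) '' Ioc 0 s = Ioc 0 y := by
      ext t
      simp only [mem_image, mem_Ioc]
      constructor
      · rintro ⟨x, ⟨hx0, hxs⟩, rfl⟩
        constructor
        · positivity
        · calc x ^ 2 ≤ s ^ 2 := by gcongr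
            _ = y := hssq
      · rintro ⟨ht0, hty⟩
        refine ⟨Real.sqrt t, ⟨Real.sqrt_pos.mpr ht0, Real.sqrt_le_sqrt hty⟩,
          Real.sq_sqrt ht0.le⟩
    have hderiv : ∀ x ∈ Ioc (0:ℝ) s,
        HasDerivWithinAt (fun x : ℝ => x ^ 2) (2 * x) (Ioc 0 s) x := by
      intro x _
      simpa using (hasDerivAt_pow 2 x).hasDerivWithinAt
    have hgamma : ∫⁻ x in Iic y, gammaPDF (1/2) r x
        = ∫⁻ x in Ioc 0 s, ENNReal.ofReal |2 * x| * gammaPDF (1/2) r (x ^ 2) := by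
      rw [← Set.Iic_union_Ioc_eq_Iic hy,
        lintegral_union measurableSet_Ioc (Set.Iic_disjoint_Ioc le_rfl)]
      have h1 : ∫⁻ x in Iic (0:ℝ), gammaPDF (1/2) r x = 0 := by
        rw [setLIntegral_congr_fun (g := fun _ => 0) measurableSet_Iic
          (fun x (hx : x ≤ 0) => gammaPDF_half_of_nonpos hx)]
        simp
      rw [h1, zero_add, ← himg,
        lintegral_image_eq_lintegral_abs_deriv_mul' measurableSet_Ioc hderiv hinj]
    -- pointwise identity
    have hpoint : ∀ x ∈ Ioc (0:ℝ) s,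
        ENNReal.ofReal |2 * x| * gammaPDF (1/2) r (x ^ 2)
          = 2 * gaussianPDF 0 v x := by
      intro x hx
      have hx0 : 0 < x := hx.1
      rw [gammaPDF_of_nonneg (by positivity), gaussianPDF]
      rw [abs_of_pos (by positivity : (0:ℝ) < 2 * x)]
      rw [← ENNReal.ofReal_mul (by positivity), ← ENNReal.ofReal_ofNat,
        ← ENNReal.ofReal_mul (by norm_num)]
      congr 1
      have hΓ : Real.Gamma (1/2) = Real.sqrt π := Real.Gamma_one_half_eq
      have hrpow : (x ^ 2 : ℝ) ^ ((1:ℝ)/2 - 1) = x⁻¹ := by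
        rw [← Real.rpow_natCast x 2, ← Real.rpow_mul hx0.le,
          show ((2:ℕ):ℝ) * ((1:ℝ)/2 - 1) = -1 by push_cast; ring, Real.rpow_neg_one]
      have hrr : r ^ ((1:ℝ)/2) = Real.sqrt r := (Real.sqrt_eq_rpow r).symm
      rw [hΓ, hrpow, hrr, gaussianPDFReal]
      have hv_coe : (v : ℝ) = σ ^ 2 := rfl
      rw [hv_coe]
      have hsqrt_r : Real.sqrt r = (Real.sqrt (2 * σ ^ 2))⁻¹ := by
        rw [hr_def, one_div, Real.sqrt_inv]
      have h2pi : Real.sqrt (2 * π * σ ^ 2) = Real.sqrt (2 * σ ^ 2) * Real.sqrt π := by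
        rw [← Real.sqrt_mul (by positivity)]
        ring_nf
      rw [hsqrt_r, h2pi]
      have hπ : 0 < Real.sqrt π := Real.sqrt_pos.mpr pi_pos
      have h2σ : 0 < Real.sqrt (2 * σ ^ 2) := Real.sqrt_pos.mpr (by positivity)
      have hexp : -(r * x ^ 2) = -(x - 0) ^ 2 / (2 * σ ^ 2) := by
        rw [hr_def]
        field_simp
        ring
      rw [hexp]
      field_simp
    have hgamma2 : ∫⁻ x in Iic y, gammaPDF (1/2) r x
        = 2 * ∫⁻ x in Ioc 0 s, gaussianPDF 0 v x := by
      rw [hgamma, setLIntegral_congr_fun measurableSet_Ioc hpoint,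
        lintegral_const_mul 2 (measurable_gaussianPDF 0 v)]
    -- the gaussian side
    rw [hpre, gaussianReal_apply 0 hv, hgamma2]
    have hsplit : Icc (-s) s = Ico (-s) 0 ∪ Icc 0 s :=
      (Set.Ico_union_Icc_eq_Icc (neg_nonpos.mpr hs0) hs0).symm
    rw [hsplit, lintegral_union measurableSet_Icc (by
      rw [Set.disjoint_left]
      rintro x ⟨_, h2⟩ ⟨h3, _⟩
      exact absurd h3 (not_le.mpr h2))]
    have hIcc : ∫⁻ x in Icc (0:ℝ) s, gaussianPDF 0 v x
        = ∫⁻ x in Ioc (0:ℝ) s, gaussianPDF 0 v x :=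
      (setLIntegral_congr (Filter.EventuallyEq.symm Ioc_ae_eq_Icc))
    have heven : ∀ x : ℝ, gaussianPDF 0 v (-x) = gaussianPDF 0 v x := by
      intro x
      simp only [gaussianPDF, gaussianPDFReal]
      ring_nf
    have hIco : ∫⁻ x in Ico (-s) (0:ℝ), gaussianPDF 0 v x
        = ∫⁻ x in Ioc (0:ℝ) s, gaussianPDF 0 v x := by
      have hnegimg : Neg.neg '' Ioc (0:ℝ) s = Ico (-s) 0 := by
        rw [Set.image_neg_Ioc, neg_zero]
      have hnder : ∀ x ∈ Ioc (0:ℝ) s,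
          HasDerivWithinAt (Neg.neg : ℝ → ℝ) (-1) (Ioc 0 s) x := fun x _ =>
        (hasDerivAt_neg x).hasDerivWithinAt
      have hninj : Set.InjOn (Neg.neg : ℝ → ℝ) (Ioc 0 s) := fun a _ b _ h => neg_injective h
      rw [← hnegimg,
        lintegral_image_eq_lintegral_abs_deriv_mul' measurableSet_Ioc hnder hninj]
      simp [heven]
    rw [hIcc, hIco, two_mul]
  · -- y < 0
    push_neg at hy
    have hpre : (fun x : ℝ => x ^ 2) ⁻¹' Iic y = ∅ := by
      ext x
      simp only [mem_preimage, mem_Iic, mem_empty_iff_false, iff_false, not_le]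
      nlinarith [sq_nonneg x]
    rw [hpre, measure_empty]
    rw [setLIntegral_congr_fun (g := fun _ => 0) measurableSet_Iic
      (fun x (hx : x ≤ y) => gammaPDF_half_of_nonpos (hx.trans hy.le))]
    simp
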